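/- Let T ⊆ ℝ² be a solid triangle with vertices v₁, v₂, v₃, and let f : T → ℝ³ be a 1-Lipschitz map such that ‖f(vᵢ) − f(vⱼ)‖ = ‖vᵢ − vⱼ‖ for all i, j. Then f is an isometry onto its image: ‖f(x) − f(y)‖ = ‖x − y‖ for all x, y ∈ T, and f is an affine map. -/

import Mathlib

open AffineMap Set

private lemma normsq_aux {V : Type*} [NormedAddCommGroup V] [InnerProductSpace ℝ V]
    (x y : V) (a b : ℝ) :
    ‖a • x + b • y‖ ^ 2 =
      a ^ 2 * ‖x‖ ^ 2 + b ^ 2 * ‖y‖ ^ 2 + a * b * (‖x‖ ^ 2 + ‖y‖ ^ 2 - ‖x - y‖ ^ 2) := by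
  have h1 := norm_add_sq_real (a • x) (b • y)
  have h2 := norm_sub_sq_real x y
  have h3 : inner ℝ (a • x) (b • y) = a * b * inner ℝ x y := by
    rw [real_inner_smul_left, real_inner_smul_right]; ring
  rw [h1, h3, norm_smul, norm_smul]
  simp only [mul_pow, sq_abs, Real.norm_eq_abs]
  linear_combination (a*b) * h2

private lemma seg_rigid {E F : Type*} [NormedAddCommGroup E] [NormedSpace ℝ E]
    [NormedAddCommGroup F] [NormedSpace ℝ F] [StrictConvexSpace ℝ F]
    {s : Set E} {f : E → F} (hf : LipschitzOnWith 1 f s) {a b : E}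
    (hseg : segment ℝ a b ⊆ s) (hd : dist (f a) (f b) = dist a b)
    {t : ℝ} (ht : t ∈ Set.Icc (0 : ℝ) 1) :
    f (AffineMap.lineMap a b t) = AffineMap.lineMap (f a) (f b) t := by
  obtain ⟨ht0, ht1⟩ := ht
  set x := AffineMap.lineMap a b t with hxdef
  have hxmem : x ∈ segment ℝ a b := by
    rw [segment_eq_image_lineMap]; exact ⟨t, ⟨ht0, ht1⟩, rfl⟩
  have ha : a ∈ s := hseg (left_mem_segment ℝ a b)
  have hb : b ∈ s := hseg (right_mem_segment ℝ a b)
  have hx : x ∈ s := hseg hxmem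
  have hax : dist a x = t * dist a b := by
    rw [dist_comm, hxdef, dist_lineMap_left, Real.norm_eq_abs, abs_of_nonneg ht0]
  have hxb : dist x b = (1 - t) * dist a b := by
    rw [hxdef, dist_lineMap_right, Real.norm_eq_abs, abs_of_nonneg (by linarith)]
  have h1 : dist (f a) (f x) ≤ t * dist a b := by
    have := hf.dist_le_mul a ha x hx
    simpa [hax] using this
  have h2 : dist (f x) (f b) ≤ (1 - t) * dist a b := by
    have := hf.dist_le_mul x hx b hb
    simpa [hxb] using this
  have htri := dist_triangle (f a) (f x) (f b)
  have e1 : dist (f a) (f x) = t * dist (f a) (f b) := by rw [hd]; linarith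
  have e2 : dist (f x) (f b) = (1 - t) * dist (f a) (f b) := by rw [hd]; linarith
  exact eq_lineMap_of_dist_eq_mul_of_dist_eq_mul e1 e2

set_option maxHeartbeats 1000000 in
/-- A 1-Lipschitz map on a solid triangle that preserves the pairwise distances
between the vertices is an isometry onto its image, and is affine. -/
theorem stmt_14 (v : Fin 3 → EuclideanSpace ℝ (Fin 2))
    (hv : AffineIndependent ℝ v)
    (f : EuclideanSpace ℝ (Fin 2) → EuclideanSpace ℝ (Fin 3))
    (hf : LipschitzOnWith 1 f (convexHull ℝ (Set.range v)))
    (hvert : ∀ i j, dist (f (v i)) (f (v j)) = dist (v i) (v j)) :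
    (∀ x ∈ convexHull ℝ (Set.range v), ∀ y ∈ convexHull ℝ (Set.range v),
        dist (f x) (f y) = dist x y) ∧
      ∃ g : EuclideanSpace ℝ (Fin 2) →ᵃ[ℝ] EuclideanSpace ℝ (Fin 3),
        Set.EqOn f g (convexHull ℝ (Set.range v)) := by
  set T := convexHull ℝ (Set.range v) with hT
  -- linear independence of the edge vectors
  have hli : LinearIndependent ℝ (fun i : Fin 2 => v i.succ - v 0) := by
    have h := (affineIndependent_iff_linearIndependent_vsub ℝ v 0).mp hv
    have hinj : Function.Injective
        (fun i : Fin 2 => (⟨i.succ, Fin.succ_ne_zero i⟩ : {x : Fin 3 // x ≠ 0})) := by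
      intro i j hij
      simpa [Fin.succ_inj] using Subtype.ext_iff.mp hij
    have := h.comp _ hinj
    exact this
  have hcard : Fintype.card (Fin 2) = Module.finrank ℝ (EuclideanSpace ℝ (Fin 2)) := by
    simp [finrank_euclideanSpace_fin]
  have hspan : Submodule.span ℝ {v 1 - v 0, v 2 - v 0} = ⊤ := by
    have hbcoe := coe_basisOfLinearIndependentOfCardEqFinrank hli hcard
    have h1 : Set.range ⇑(basisOfLinearIndependentOfCardEqFinrank hli hcard)
        = {v 1 - v 0, v 2 - v 0} := by
      rw [hbcoe]
      ext x
      simp [Fin.exists_fin_two, eq_comm]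
    rw [← h1]
    exact (basisOfLinearIndependentOfCardEqFinrank hli hcard).span_eq
  obtain ⟨L, hL⟩ : ∃ L : EuclideanSpace ℝ (Fin 2) →ₗ[ℝ] EuclideanSpace ℝ (Fin 3),
      ∀ i : Fin 2, L (v i.succ - v 0) = f (v i.succ) - f (v 0) := by
    refine ⟨(basisOfLinearIndependentOfCardEqFinrank hli hcard).constr ℝ
      (fun i : Fin 2 => f (v i.succ) - f (v 0)), fun i => ?_⟩
    have hbcoe := coe_basisOfLinearIndependentOfCardEqFinrank hli hcard
    have h2 : (v i.succ - v 0) = basisOfLinearIndependentOfCardEqFinrank hli hcard i := by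
      rw [hbcoe]
    rw [h2, Module.Basis.constr_basis]
  have hL1 : L (v 1 - v 0) = f (v 1) - f (v 0) := by simpa using hL 0
  have hL2 : L (v 2 - v 0) = f (v 2) - f (v 0) := by simpa using hL 1
  -- norm facts
  have hdn : ∀ i j, ‖f (v i) - f (v j)‖ = ‖v i - v j‖ := by
    intro i j; rw [← dist_eq_norm, ← dist_eq_norm]; exact hvert i j
  have hn1 : ‖L (v 1 - v 0)‖ = ‖v 1 - v 0‖ := by rw [hL1]; exact hdn 1 0
  have hn2 : ‖L (v 2 - v 0)‖ = ‖v 2 - v 0‖ := by rw [hL2]; exact hdn 2 0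
  have hn12 : ‖L (v 1 - v 0) - L (v 2 - v 0)‖ = ‖(v 1 - v 0) - (v 2 - v 0)‖ := by
    rw [hL1, hL2, sub_sub_sub_cancel_right, sub_sub_sub_cancel_right]
    exact hdn 1 2
  -- L is an isometry
  have hiso : ∀ u, ‖L u‖ = ‖u‖ := by
    intro u
    have hu : u ∈ Submodule.span ℝ {v 1 - v 0, v 2 - v 0} := by rw [hspan]; trivial
    obtain ⟨a, c, hu⟩ := Submodule.mem_span_pair.mp hu
    have hLu : L u = a • L (v 1 - v 0) + c • L (v 2 - v 0) := by
      rw [← hu, map_add, map_smul, map_smul]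
    have hq1 := normsq_aux (v 1 - v 0) (v 2 - v 0) a c
    have hq2 := normsq_aux (L (v 1 - v 0)) (L (v 2 - v 0)) a c
    rw [hn1, hn2, hn12] at hq2
    have hsq : ‖L u‖ ^ 2 = ‖u‖ ^ 2 := by rw [hLu, ← hu, hq1, hq2]
    nlinarith [norm_nonneg (L u), norm_nonneg u, hsq]
  -- the affine map g
  let g : EuclideanSpace ℝ (Fin 2) →ᵃ[ℝ] EuclideanSpace ℝ (Fin 3) :=
    { toFun := fun x => f (v 0) + L (x - v 0)
      linear := L
      map_vadd' := by
        intro p u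
        show f (v 0) + L ((u + p) - v 0) = L u + (f (v 0) + L (p - v 0))
        rw [show (u + p) - v 0 = u + (p - v 0) by abel, map_add]
        abel }
  have hgapply : ∀ x, g x = f (v 0) + L (x - v 0) := fun x => rfl
  have hgv : ∀ i, g (v i) = f (v i) := by
    intro i
    fin_cases i <;> simp [hgapply, hL1, hL2]
  have hgd : ∀ x y, dist (g x) (g y) = dist x y := by
    intro x y
    have hsub : g x - g y = L (x - y) := by
      have h1 : (x - v 0) - (y - v 0) = x - y := by abel
      calc g x - g y = L (x - v 0) - L (y - v 0) := by
              rw [hgapply, hgapply]; abel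
        _ = L ((x - v 0) - (y - v 0)) := (map_sub L _ _).symm
        _ = L (x - y) := by rw [h1]
    rw [dist_eq_norm, hsub, hiso, ← dist_eq_norm]
  -- f = g on each edge
  have hedge : ∀ i j : Fin 3, ∀ y ∈ segment ℝ (v i) (v j), f y = g y := by
    intro i j y hy
    have hsegsub : segment ℝ (v i) (v j) ⊆ T :=
      (convex_convexHull ℝ _).segment_subset
        (subset_convexHull ℝ _ (Set.mem_range_self i))
        (subset_convexHull ℝ _ (Set.mem_range_self j))
    rw [segment_eq_image_lineMap] at hy
    obtain ⟨t, ht, rfl⟩ := hy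
    rw [seg_rigid hf hsegsub (hvert i j) ht, ← hgv i, ← hgv j, ← AffineMap.apply_lineMap]
  -- f = g on T
  have heq : Set.EqOn f g T := by
    intro x hx
    rw [hT, convexHull_range_eq_exists_affineCombination] at hx
    obtain ⟨s, w, hw0, hw1, hx⟩ := hx
    set W : Fin 3 → ℝ := fun i => if i ∈ s then w i else 0 with hWdef
    have hW0 : ∀ i, 0 ≤ W i := by
      intro i; rw [hWdef]; dsimp only
      split
      · exact hw0 _ ‹_›
      · exact le_refl 0
    have hW1 : W 0 + W 1 + W 2 = 1 := by
      have : ∑ i, W i = 1 := by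
        rw [hWdef]
        rw [Finset.sum_ite_mem Finset.univ s w, Finset.univ_inter]
        exact hw1
      simpa [Fin.sum_univ_three] using this
    have hxc : x = W 0 • v 0 + W 1 • v 1 + W 2 • v 2 := by
      rw [← hx, Finset.affineCombination_indicator_subset w v (Finset.subset_univ s)]
      have hsum : ∑ i, Set.indicator (↑s) w i = 1 := by
        have : Set.indicator (↑s) w = W := by
          funext i
          simp [Set.indicator_apply, hWdef]
        rw [this]
        simpa [Fin.sum_univ_three] using hW1
      rw [Finset.univ.affineCombination_eq_linear_combination v _ hsum]
      have : Set.indicator (↑s) w = W := by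
        funext i
        simp [Set.indicator_apply, hWdef]
      rw [this, Fin.sum_univ_three]
    by_cases hc : W 1 + W 2 = 0
    · have h1 : W 1 = 0 := by linarith [hW0 1, hW0 2]
      have h2 : W 2 = 0 := by linarith [hW0 1, hW0 2]
      have h0 : W 0 = 1 := by linarith
      have hxv : x = v 0 := by
        rw [hxc, h0, h1, h2, one_smul, zero_smul, zero_smul, add_zero, add_zero]
      rw [hxv, ← hgv 0]
    · have hcpos : 0 < W 1 + W 2 := lt_of_le_of_ne (by linarith [hW0 1, hW0 2]) (Ne.symm hc)
      set c : ℝ := W 1 + W 2 with hcdef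
      set p : EuclideanSpace ℝ (Fin 2) := (W 1 / c) • v 1 + (W 2 / c) • v 2 with hpdef
      have hpseg : p ∈ segment ℝ (v 1) (v 2) :=
        ⟨W 1 / c, W 2 / c, div_nonneg (hW0 1) hcpos.le, div_nonneg (hW0 2) hcpos.le,
          by field_simp; exact hcdef.symm, rfl⟩
      have hpT : p ∈ T :=
        ((convex_convexHull ℝ _).segment_subset
          (subset_convexHull ℝ _ (Set.mem_range_self 1))
          (subset_convexHull ℝ _ (Set.mem_range_self 2))) hpseg
      have hv0T : v 0 ∈ T := subset_convexHull ℝ _ (Set.mem_range_self 0)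
      have hsegT : segment ℝ (v 0) p ⊆ T :=
        (convex_convexHull ℝ _).segment_subset hv0T hpT
      have hfp : f p = g p := hedge 1 2 p hpseg
      have hdist0p : dist (f (v 0)) (f p) = dist (v 0) p := by
        rw [hfp, ← hgv 0]
        exact hgd (v 0) p
      have hxline : x = AffineMap.lineMap (v 0) p c := by
        rw [AffineMap.lineMap_apply]
        show x = c • (p - v 0) + v 0
        rw [hxc, hpdef, smul_sub, smul_add, smul_smul, smul_smul,
          mul_div_cancel₀ _ hc, mul_div_cancel₀ _ hc]
        have h0 : W 0 = 1 - c := by rw [hcdef]; linarith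
        rw [h0, sub_smul, one_smul]
        abel
      have hc1 : c ≤ 1 := by linarith [hW0 0]
      have := seg_rigid hf hsegT hdist0p (Set.mem_Icc.mpr ⟨hcpos.le, hc1⟩)
      rw [hxline, this, hfp, ← hgv 0, ← AffineMap.apply_lineMap]
  constructor
  · intro x hx y hy
    rw [heq hx, heq hy]
    exact hgd x y
  · exact ⟨g, heq⟩
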